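/- The discretized pseudo-group action X_m = f(x_m), Y_n = y_n, U_{m,n} = u_{m,n}·(x_{m+1} − x_m)/(f(x_{m+1}) − f(x_m)) acts freely: let x : ℤ → ℝ satisfy x_{m+1} ≠ x_m for all m, let u : ℤ × ℤ → ℝ be nowhere zero, let f : ℝ → ℝ, and fix m, n ∈ ℤ and k ≥ 0 with f(x_{m+ℓ+1}) ≠ f(x_{m+ℓ}) for 0 ≤ ℓ ≤ k. If f(x_m) = x_m and, for every 0 ≤ ℓ ≤ k, u_{m+ℓ,n}·(x_{m+ℓ+1} − x_{m+ℓ})/(f(x_{m+ℓ+1}) − f(x_{m+ℓ})) = u_{m+ℓ,n}, then f(x_{m+ℓ}) = x_{m+ℓ} for every 0 ≤ ℓ ≤ k + 1. -/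

import Mathlib

/-- Freeness of the discretized pseudo-group action
X_m = f(x_m), Y_n = y_n, U_{m,n} = u_{m,n}·Δx_m/Δf_m. -/
theorem stmt_4
    (x : ℤ → ℝ) (u : ℤ → ℤ → ℝ) (f : ℝ → ℝ) (m n : ℤ) (k : ℕ)
    (hx : ∀ m : ℤ, x (m + 1) ≠ x m)
    (hu : ∀ m n : ℤ, u m n ≠ 0)
    (hf : ∀ l : ℕ, l ≤ k → f (x (m + l + 1)) ≠ f (x (m + l)))
    (hid : f (x m) = x m)
    (hfix : ∀ l : ℕ, l ≤ k →
      u (m + l) n * (x (m + l + 1) - x (m + l)) / (f (x (m + l + 1)) - f (x (m + l)))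
        = u (m + l) n) :
    ∀ l : ℕ, l ≤ k + 1 → f (x (m + l)) = x (m + l) := by
  intro l hl
  induction l with
  | zero => simpa using hid
  | succ l ih =>
    have hlk : l ≤ k := Nat.lt_succ_iff.mp hl
    have ihl := ih (le_trans (Nat.le_succ l) hl)
    have hfe := hfix l hlk
    have hfd := hf l hlk
    have hune := hu (m + l) n
    have hxd : x (m + l + 1) - x (m + l) ≠ 0 := sub_ne_zero.mpr (hx (m + l))
    have hfd' : f (x (m + l + 1)) - f (x (m + l)) ≠ 0 := sub_ne_zero.mpr hfd
    -- from hfe: Δx = Δf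
    have key : x (m + l + 1) - x (m + l) = f (x (m + l + 1)) - f (x (m + l)) := by
      field_simp at hfe
      linarith
    have : f (x (m + l + 1)) = x (m + l + 1) := by
      have := key
      rw [ihl] at this
      linarith
    have hcast : (m : ℤ) + (l + 1 : ℕ) = m + l + 1 := by push_cast; ring
    rw [hcast]
    exact this
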